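/- Let α, β > 0 and let f, g : J → ℝ be C² functions on an open interval J with g'(u)² − f'(u)² = 1 and α²f(u)² + β²g(u)² > 0 for all u ∈ J, and suppose the zero mean curvature equation −(g'f'' − f'g'')/(g'² − f'²) = (α²f g' + β²g f')/(α²f² + β²g²) holds on J. Then the function u ↦ α²f(u)²g'(u)² + β²g(u)²f'(u)² has zero derivative on J, i.e. it is constant. -/

import Mathlib

theorem moore_conserved_quantity
    (α β : ℝ) (hα : 0 < α) (hβ : 0 < β)
    (J : Set ℝ) (hJopen : IsOpen J) (hJconn : J.OrdConnected)
    (f g : ℝ → ℝ) (hf : ContDiffOn ℝ 2 f J) (hg : ContDiffOn ℝ 2 g J)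
    (harc : ∀ u ∈ J, deriv g u ^ 2 - deriv f u ^ 2 = 1)
    (hpos : ∀ u ∈ J, 0 < α ^ 2 * f u ^ 2 + β ^ 2 * g u ^ 2)
    (hmin : ∀ u ∈ J,
      -(deriv g u * deriv (deriv f) u - deriv f u * deriv (deriv g) u) /
          (deriv g u ^ 2 - deriv f u ^ 2) =
        (α ^ 2 * f u * deriv g u + β ^ 2 * g u * deriv f u) /
          (α ^ 2 * f u ^ 2 + β ^ 2 * g u ^ 2)) :
    (∀ u ∈ J,
      deriv (fun s => α ^ 2 * f s ^ 2 * deriv g s ^ 2 + β ^ 2 * g s ^ 2 * deriv f s ^ 2) u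
        = 0) ∧
    (∀ u₁ ∈ J, ∀ u₂ ∈ J,
      α ^ 2 * f u₁ ^ 2 * deriv g u₁ ^ 2 + β ^ 2 * g u₁ ^ 2 * deriv f u₁ ^ 2 =
        α ^ 2 * f u₂ ^ 2 * deriv g u₂ ^ 2 + β ^ 2 * g u₂ ^ 2 * deriv f u₂ ^ 2) := by
  set F : ℝ → ℝ := fun s => α ^ 2 * f s ^ 2 * deriv g s ^ 2 + β ^ 2 * g s ^ 2 * deriv f s ^ 2
    with hF
  have hf1 : ContDiffOn ℝ 1 (deriv f) J := hf.deriv_of_isOpen hJopen (by norm_num)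
  have hg1 : ContDiffOn ℝ 1 (deriv g) J := hg.deriv_of_isOpen hJopen (by norm_num)
  have key : ∀ u ∈ J, HasDerivAt F 0 u := by
    intro u hu
    have hnhds : J ∈ nhds u := hJopen.mem_nhds hu
    have hfd : HasDerivAt f (deriv f u) u :=
      ((hf.contDiffAt hnhds).differentiableAt (by norm_num)).hasDerivAt
    have hgd : HasDerivAt g (deriv g u) u :=
      ((hg.contDiffAt hnhds).differentiableAt (by norm_num)).hasDerivAt
    have hfd2 : HasDerivAt (deriv f) (deriv (deriv f) u) u :=
      ((hf1.contDiffAt hnhds).differentiableAt (by norm_num)).hasDerivAt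
    have hgd2 : HasDerivAt (deriv g) (deriv (deriv g) u) u :=
      ((hg1.contDiffAt hnhds).differentiableAt (by norm_num)).hasDerivAt
    set f' := deriv f u
    set g' := deriv g u
    set a := deriv (deriv f) u
    set b := deriv (deriv g) u
    -- derivative of the arclength relation
    have harc' : g' * b - f' * a = 0 := by
      have hφ : HasDerivAt (fun s => deriv g s ^ 2 - deriv f s ^ 2)
          (2 * g' * b - 2 * f' * a) u := by
        have := ((hgd2.pow 2).sub (hfd2.pow 2))
        refine this.congr_deriv ?_
        ring
      have heq : (fun s => deriv g s ^ 2 - deriv f s ^ 2) =ᶠ[nhds u] fun _ => (1 : ℝ) :=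
        Filter.eventuallyEq_of_mem hnhds harc
      have h0 : deriv (fun s => deriv g s ^ 2 - deriv f s ^ 2) u = 0 := by
        rw [heq.deriv_eq]; simp
      have := hφ.deriv
      rw [h0] at this
      linarith
    have hD : 0 < α ^ 2 * f u ^ 2 + β ^ 2 * g u ^ 2 := hpos u hu
    have hmin' : (α ^ 2 * f u ^ 2 + β ^ 2 * g u ^ 2) * (f' * b - g' * a) =
        α ^ 2 * f u * g' + β ^ 2 * g u * f' := by
      have h := hmin u hu
      rw [harc u hu] at h
      field_simp at h
      linarith [h]
    -- the product-rule derivative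
    have hHD : HasDerivAt F
        (α ^ 2 * (2 * f u * f' * g' ^ 2 + f u ^ 2 * (2 * g' * b)) +
          β ^ 2 * (2 * g u * g' * f' ^ 2 + g u ^ 2 * (2 * f' * a))) u := by
      have h1 : HasDerivAt (fun s => α ^ 2 * (f s ^ 2 * deriv g s ^ 2) +
          β ^ 2 * (g s ^ 2 * deriv f s ^ 2))
          (α ^ 2 * (2 * f u * f' * g' ^ 2 + f u ^ 2 * (2 * g' * b)) +
            β ^ 2 * (2 * g u * g' * f' ^ 2 + g u ^ 2 * (2 * f' * a))) u := by
        have hA := ((hfd.pow 2).mul (hgd2.pow 2)).const_mul (α ^ 2)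
        have hB := ((hgd.pow 2).mul (hfd2.pow 2)).const_mul (β ^ 2)
        refine (hA.add hB).congr_deriv ?_
        push_cast [Pi.pow_apply]
        ring
      have : F = fun s => α ^ 2 * (f s ^ 2 * deriv g s ^ 2) +
          β ^ 2 * (g s ^ 2 * deriv f s ^ 2) := by
        funext s; rw [hF]; ring
      rw [this]
      exact h1
    have hE0 : α ^ 2 * (2 * f u * f' * g' ^ 2 + f u ^ 2 * (2 * g' * b)) +
        β ^ 2 * (2 * g u * g' * f' ^ 2 + g u ^ 2 * (2 * f' * a)) = 0 := by
      have h1 := harc u hu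
      have hne : (α ^ 2 * f u ^ 2 + β ^ 2 * g u ^ 2) ≠ 0 := ne_of_gt hD
      have hmul : (α ^ 2 * (2 * f u * f' * g' ^ 2 + f u ^ 2 * (2 * g' * b)) +
          β ^ 2 * (2 * g u * g' * f' ^ 2 + g u ^ 2 * (2 * f' * a))) *
          (α ^ 2 * f u ^ 2 + β ^ 2 * g u ^ 2) = 0 := by
        linear_combination
          (-2 * α ^ 2 * f u ^ 2 * g' * f' - 2 * β ^ 2 * g u ^ 2 * f' * g') * hmin' +
          ((2 * α ^ 2 * f u ^ 2 * g' ^ 2 + 2 * β ^ 2 * g u ^ 2 * f' ^ 2) *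
            (α ^ 2 * f u ^ 2 + β ^ 2 * g u ^ 2)) * harc' +
          ((-2 * α ^ 2 * f u ^ 2 * g' * b - 2 * β ^ 2 * g u ^ 2 * f' * a) *
            (α ^ 2 * f u ^ 2 + β ^ 2 * g u ^ 2)) * h1
      exact (mul_eq_zero.mp hmul).resolve_right hne
    rw [hE0] at hHD
    exact hHD
  constructor
  · exact fun u hu => (key u hu).deriv
  · intro u₁ hu₁ u₂ hu₂
    have hconv : Convex ℝ J := convex_iff_ordConnected.mpr hJconn
    have hdiff : DifferentiableOn ℝ F J := fun u hu =>
      (key u hu).differentiableAt.differentiableWithinAt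
    have hfd0 : ∀ u ∈ J, fderivWithin ℝ F J u = 0 := by
      intro u hu
      rw [fderivWithin_of_isOpen hJopen hu, (key u hu).hasFDerivAt.fderiv]
      ext x
      simp
    exact hconv.is_const_of_fderivWithin_eq_zero hdiff hfd0 hu₁ hu₂
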